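/- Let p ∈ (1,2) and a > 0, and let ψ : [0,1) → [0,∞) be continuously differentiable with ψ(0) = 0, ψ(y) > 0 for y ∈ (0,1), satisfying ψ'(y) + (p/(p-1)) ψ(y)^{(p-1)/p} = (p a^{2-p}/(p-1))(1-y) for all y ∈ (0,1). If ψ(y) → 0 as y → 1, then, with κ := (p-1)^{-p}: (i) 0 ≤ ψ(y) ≤ κ(1-y)^p for all y ∈ (0,1); (ii) the function y ↦ ψ(y)(1-y)^{-p} has a limit L as y → 1, and L ∈ {0, κ}. -/

import Mathlib

open Set Filter Topology

/-- `ψ : [0,1) → [0,∞)` is continuously differentiable (with derivative `ψd`), `ψ(0) = 0`,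
and `ψ' + (p/(p-1)) ψ^{(p-1)/p} = (p a^{2-p}/(p-1))(1-y)` holds on `(0,1)`. -/
def PsiSol (p a : ℝ) (ψ ψd : ℝ → ℝ) : Prop :=
  (∀ y ∈ Set.Ico (0:ℝ) 1, HasDerivWithinAt ψ (ψd y) (Set.Ico 0 1) y) ∧
  ContinuousOn ψd (Set.Ico 0 1) ∧
  (∀ y ∈ Set.Ico (0:ℝ) 1, 0 ≤ ψ y) ∧
  ψ 0 = 0 ∧
  (∀ y ∈ Set.Ioo (0:ℝ) 1,
    ψd y + (p/(p-1)) * ψ y ^ ((p-1)/p) = (p * a ^ (2-p) / (p-1)) * (1-y))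

section Aux
variable {p a : ℝ} {ψ ψd : ℝ → ℝ}

theorem aux_hasDerivAt_psi
    (h1 : ∀ y ∈ Set.Ico (0:ℝ) 1, HasDerivWithinAt ψ (ψd y) (Set.Ico 0 1) y)
    {y : ℝ} (hy : y ∈ Ioo (0:ℝ) 1) : HasDerivAt ψ (ψd y) y := by
  have h := h1 y (Ioo_subset_Ico_self hy)
  exact h.hasDerivAt (Filter.mem_of_superset (isOpen_Ioo.mem_nhds hy) Ioo_subset_Ico_self)

theorem aux_hasDerivAt_v (hp : p ∈ Set.Ioo (1:ℝ) 2)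
    (h1 : ∀ y ∈ Set.Ico (0:ℝ) 1, HasDerivWithinAt ψ (ψd y) (Set.Ico 0 1) y)
    (heq : ∀ y ∈ Set.Ioo (0:ℝ) 1,
      ψd y + (p/(p-1)) * ψ y ^ ((p-1)/p) = (p * a ^ (2-p) / (p-1)) * (1-y))
    (hpos : ∀ y ∈ Set.Ioo (0:ℝ) 1, 0 < ψ y)
    {y : ℝ} (hy : y ∈ Ioo (0:ℝ) 1) :
    HasDerivAt (fun z => ψ z ^ (1/p))
      ((p * a ^ (2-p) / (p-1)) / p * (1-y) * ψ y ^ ((1-p)/p) - (p-1)⁻¹) y := by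
  have hp1 : (1:ℝ) < p := hp.1
  have hp0 : (0:ℝ) < p := by linarith
  have hψy : 0 < ψ y := hpos y hy
  have h := (aux_hasDerivAt_psi h1 hy).rpow_const (p := 1/p) (Or.inl (ne_of_gt hψy))
  convert h using 1
  have hode : ψd y = (p * a ^ (2-p) / (p-1)) * (1-y) - (p/(p-1)) * ψ y ^ ((p-1)/p) := by
    have := heq y hy; linarith
  rw [hode]
  have e1 : ψ y ^ (1/p - 1) = ψ y ^ ((1-p)/p) := by
    congr 1; field_simp
  have e2 : ψ y ^ ((1-p)/p) * ψ y ^ ((p-1)/p) = 1 := by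
    rw [← Real.rpow_add hψy]
    have : (1-p)/p + (p-1)/p = 0 := by field_simp; ring
    rw [this, Real.rpow_zero]
  rw [e1]
  have hpm1 : p - 1 ≠ 0 := by linarith
  field_simp
  linear_combination e2

theorem aux_C_pos (hp : p ∈ Set.Ioo (1:ℝ) 2) (ha : 0 < a) :
    0 < p * a ^ (2-p) / (p-1) := by
  have hp1 : (1:ℝ) < p := hp.1
  have : (0:ℝ) < a ^ (2-p) := Real.rpow_pos_of_pos ha _
  have hp0 : (0:ℝ) < p := by linarith
  exact div_pos (mul_pos hp0 this) (by linarith)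

theorem aux_tendsto_sub : Tendsto (fun y : ℝ => 1 - y) (𝓝[<] (1:ℝ)) (𝓝 0) := by
  have : Tendsto (fun y : ℝ => 1 - y) (𝓝 (1:ℝ)) (𝓝 (1 - 1)) :=
    (tendsto_const_nhds.sub tendsto_id)
  simpa using this.mono_left nhdsWithin_le_nhds

theorem aux_mem_filter : Ioo (0:ℝ) 1 ∈ 𝓝[<] (1:ℝ) := by
  have h1 : Ioi (0:ℝ) ∈ 𝓝 (1:ℝ) := Ioi_mem_nhds one_pos
  have h2 : Ioi (0:ℝ) ∈ 𝓝[<] (1:ℝ) := nhdsWithin_le_nhds h1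
  have h3 : Iio (1:ℝ) ∈ 𝓝[<] (1:ℝ) := self_mem_nhdsWithin
  have := Filter.inter_mem h2 h3
  simpa [Set.Ioi_inter_Iio] using this

theorem aux_part_i (hp : p ∈ Set.Ioo (1:ℝ) 2) (ha : 0 < a)
    (h1 : ∀ y ∈ Set.Ico (0:ℝ) 1, HasDerivWithinAt ψ (ψd y) (Set.Ico 0 1) y)
    (heq : ∀ y ∈ Set.Ioo (0:ℝ) 1,
      ψd y + (p/(p-1)) * ψ y ^ ((p-1)/p) = (p * a ^ (2-p) / (p-1)) * (1-y))
    (hpos : ∀ y ∈ Set.Ioo (0:ℝ) 1, 0 < ψ y)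
    (hlim : Tendsto ψ (𝓝[<] (1:ℝ)) (𝓝 0))
    {y : ℝ} (hy : y ∈ Ioo (0:ℝ) 1) :
    ψ y ^ (1/p) ≤ (1-y) * (p-1)⁻¹ := by
  have hp1 : (1:ℝ) < p := hp.1
  have hp0 : (0:ℝ) < p := by linarith
  set C := p * a ^ (2-p) / (p-1) with hC
  have hCpos : 0 < C := aux_C_pos hp ha
  set F : ℝ → ℝ := fun z => ψ z ^ (1/p) - (1-z) * (p-1)⁻¹ with hF
  have hFd : ∀ z ∈ Ioo (0:ℝ) 1, HasDerivAt F (C / p * (1-z) * ψ z ^ ((1-p)/p)) z := by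
    intro z hz
    have hv := aux_hasDerivAt_v hp h1 heq hpos hz
    have hlin : HasDerivAt (fun t : ℝ => (1-t) * (p-1)⁻¹) (-(p-1)⁻¹) z := by
      have : HasDerivAt (fun t : ℝ => 1 - t) (-1) z := by
        simpa using (hasDerivAt_id z).const_sub 1
      simpa using this.mul_const (p-1)⁻¹
    have := hv.sub hlin
    refine this.congr_deriv ?_
    ring
  -- F is strictly monotone on Ioo 0 1
  have hmono : StrictMonoOn F (Ioo (0:ℝ) 1) := by
    apply strictMonoOn_of_deriv_pos (convex_Ioo 0 1)
    · intro z hz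
      exact ((hFd z hz).differentiableAt.continuousAt).continuousWithinAt
    · intro z hz
      rw [interior_Ioo] at hz
      rw [(hFd z hz).deriv]
      have hr := Real.rpow_pos_of_pos (hpos z hz) ((1-p)/p)
      have h1z : (0:ℝ) < 1 - z := by linarith [hz.2]
      exact mul_pos (mul_pos (div_pos hCpos hp0) h1z) hr
  -- F tends to 0 at 1⁻
  have hFlim : Tendsto F (𝓝[<] (1:ℝ)) (𝓝 0) := by
    have hv0 : Tendsto (fun z => ψ z ^ (1/p)) (𝓝[<] (1:ℝ)) (𝓝 0) := by
      have h := hlim.rpow_const (p := 1/p) (Or.inr (by positivity))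
      have h0 : (0:ℝ) ^ ((1:ℝ)/p) = 0 := Real.zero_rpow (by positivity)
      rw [h0] at h; exact h
    have hl : Tendsto (fun z : ℝ => (1-z) * (p-1)⁻¹) (𝓝[<] (1:ℝ)) (𝓝 0) := by
      simpa using aux_tendsto_sub.mul_const (p-1)⁻¹
    rw [hF]; simpa using hv0.sub hl
  -- conclude F y ≤ 0
  have hFy : F y ≤ 0 := by
    apply ge_of_tendsto hFlim
    filter_upwards [aux_mem_filter, nhdsWithin_le_nhds (Ioi_mem_nhds hy.2)] with z hz hz'
    exact (hmono hy hz hz').le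
  have : ψ y ^ (1/p) - (1-y) * (p-1)⁻¹ ≤ 0 := hFy
  linarith

theorem aux_part_i' (hp : p ∈ Set.Ioo (1:ℝ) 2) (ha : 0 < a)
    (h1 : ∀ y ∈ Set.Ico (0:ℝ) 1, HasDerivWithinAt ψ (ψd y) (Set.Ico 0 1) y)
    (heq : ∀ y ∈ Set.Ioo (0:ℝ) 1,
      ψd y + (p/(p-1)) * ψ y ^ ((p-1)/p) = (p * a ^ (2-p) / (p-1)) * (1-y))
    (hpos : ∀ y ∈ Set.Ioo (0:ℝ) 1, 0 < ψ y)
    (hlim : Tendsto ψ (𝓝[<] (1:ℝ)) (𝓝 0))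
    {y : ℝ} (hy : y ∈ Ioo (0:ℝ) 1) :
    ψ y ≤ (p-1) ^ (-p) * (1-y) ^ p := by
  have hv := aux_part_i hp ha h1 heq hpos hlim hy
  have hψ0 : 0 ≤ ψ y := (hpos y hy).le
  have h1y : 0 < 1 - y := by linarith [hy.2]
  have hp1 : (1:ℝ) < p := hp.1
  have hp0 : (0:ℝ) < p := by linarith
  have hβ : (0:ℝ) ≤ (p-1)⁻¹ := by
    have : (0:ℝ) < p - 1 := by linarith
    positivity
  have key : ψ y = (ψ y ^ (1/p)) ^ p := by
    rw [← Real.rpow_mul hψ0, one_div, inv_mul_cancel₀ (ne_of_gt hp0), Real.rpow_one]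
  rw [key]
  calc (ψ y ^ (1/p)) ^ p ≤ ((1-y) * (p-1)⁻¹) ^ p :=
      Real.rpow_le_rpow (Real.rpow_nonneg hψ0 _) hv (le_of_lt hp0)
    _ = (p-1) ^ (-p) * (1-y) ^ p := by
      rw [Real.mul_rpow h1y.le hβ, Real.inv_rpow (by linarith), ← Real.rpow_neg (by linarith)]
      ring

theorem aux_w_eq (hp : p ∈ Set.Ioo (1:ℝ) 2)
    (hpos : ∀ y ∈ Set.Ioo (0:ℝ) 1, 0 < ψ y)
    {y : ℝ} (hy : y ∈ Ioo (0:ℝ) 1) :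
    ψ y * (1-y) ^ (-p) = (ψ y ^ (1/p) / (1-y)) ^ p := by
  have hψ0 : 0 ≤ ψ y := (hpos y hy).le
  have h1y : 0 < 1 - y := by linarith [hy.2]
  have hp0 : (0:ℝ) < p := by linarith [hp.1]
  rw [Real.div_rpow (Real.rpow_nonneg hψ0 _) h1y.le,
    ← Real.rpow_mul hψ0, one_div, inv_mul_cancel₀ (ne_of_gt hp0), Real.rpow_one,
    Real.rpow_neg h1y.le, div_eq_mul_inv]

theorem aux_hasDerivAt_w (hp : p ∈ Set.Ioo (1:ℝ) 2)
    (h1 : ∀ y ∈ Set.Ico (0:ℝ) 1, HasDerivWithinAt ψ (ψd y) (Set.Ico 0 1) y)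
    (heq : ∀ y ∈ Set.Ioo (0:ℝ) 1,
      ψd y + (p/(p-1)) * ψ y ^ ((p-1)/p) = (p * a ^ (2-p) / (p-1)) * (1-y))
    (hpos : ∀ y ∈ Set.Ioo (0:ℝ) 1, 0 < ψ y)
    {y : ℝ} (hy : y ∈ Ioo (0:ℝ) 1) :
    HasDerivAt (fun z => ψ z ^ (1/p) / (1-z))
      (((p * a ^ (2-p) / (p-1)) / p * (1-y) ^ (2-p) * (ψ y ^ (1/p) / (1-y)) ^ (1-p)
        + ψ y ^ (1/p) / (1-y) - (p-1)⁻¹) / (1-y)) y := by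
  have hp1 : (1:ℝ) < p := hp.1
  have hp0 : (0:ℝ) < p := by linarith
  have h1y : (0:ℝ) < 1 - y := by linarith [hy.2]
  have hψ0 : (0:ℝ) ≤ ψ y := (hpos y hy).le
  have hv := aux_hasDerivAt_v hp h1 heq hpos hy
  have hden : HasDerivAt (fun z : ℝ => 1 - z) (-1) y := by
    simpa using (hasDerivAt_id y).const_sub 1
  have h := hv.div hden (ne_of_gt h1y)
  refine h.congr_deriv ?_
  have hv0 : (0:ℝ) ≤ ψ y ^ (1/p) := Real.rpow_nonneg hψ0 _
  have e1 : ψ y ^ ((1-p)/p) = (ψ y ^ (1/p)) ^ (1-p) := by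
    rw [← Real.rpow_mul hψ0]
    congr 1; field_simp
  have e2 : (ψ y ^ (1/p) / (1-y)) ^ (1-p)
      = (ψ y ^ (1/p)) ^ (1-p) / (1-y) ^ (1-p) :=
    Real.div_rpow hv0 h1y.le (1-p)
  have e3 : (1-y) ^ (2-p) = (1-y) * (1-y) ^ (1-p) := by
    rw [show (2-p : ℝ) = 1 + (1-p) by ring, Real.rpow_add h1y, Real.rpow_one]
  have e4 : (0:ℝ) < (1-y) ^ (1-p) := Real.rpow_pos_of_pos h1y _
  rw [e1, e2, e3]
  have hs : (1-y) ≠ 0 := ne_of_gt h1y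
  have hsp : (1-y) ^ (1-p) ≠ 0 := ne_of_gt e4
  have hpn : p ≠ 0 := ne_of_gt hp0
  have hpm : p - 1 ≠ 0 := by linarith
  field_simp
  ring

theorem aux_wd_le (hp : p ∈ Set.Ioo (1:ℝ) 2) (ha : 0 < a)
    {y c c' δ : ℝ} (hy : y ∈ Ioo (0:ℝ) 1) (hc : 0 < c)
    (h1 : c ≤ ψ y ^ (1/p) / (1-y)) (h2 : ψ y ^ (1/p) / (1-y) ≤ c')
    (hsmall : (p * a ^ (2-p) / (p-1)) / p * (1-y) ^ (2-p) * c ^ (1-p) ≤ δ) :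
    ((p * a ^ (2-p) / (p-1)) / p * (1-y) ^ (2-p) * (ψ y ^ (1/p) / (1-y)) ^ (1-p)
        + ψ y ^ (1/p) / (1-y) - (p-1)⁻¹) / (1-y)
      ≤ (δ + c' - (p-1)⁻¹) / (1-y) := by
  have hp1 : (1:ℝ) < p := hp.1
  have hp0 : (0:ℝ) < p := by linarith
  have h1y : (0:ℝ) < 1 - y := by linarith [hy.2]
  have hCpos := aux_C_pos hp ha
  have hA : (0:ℝ) ≤ (p * a ^ (2-p) / (p-1)) / p * (1-y) ^ (2-p) := by
    have := Real.rpow_pos_of_pos h1y (2-p)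
    positivity
  have hwp : (ψ y ^ (1/p) / (1-y)) ^ (1-p) ≤ c ^ (1-p) :=
    Real.rpow_le_rpow_of_nonpos hc h1 (by linarith)
  have hnum : (p * a ^ (2-p) / (p-1)) / p * (1-y) ^ (2-p) * (ψ y ^ (1/p) / (1-y)) ^ (1-p)
      + ψ y ^ (1/p) / (1-y) - (p-1)⁻¹ ≤ δ + c' - (p-1)⁻¹ := by
    have := mul_le_mul_of_nonneg_left hwp hA
    nlinarith
  exact div_le_div_of_nonneg_right hnum h1y.le

theorem aux_small (hp : p ∈ Set.Ioo (1:ℝ) 2) (c : ℝ) :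
    Tendsto (fun y : ℝ => (p * a ^ (2-p) / (p-1)) / p * (1-y) ^ (2-p) * c ^ (1-p))
      (𝓝[<] (1:ℝ)) (𝓝 0) := by
  have h2p : (0:ℝ) < 2 - p := by linarith [hp.2]
  have h : Tendsto (fun y : ℝ => (1-y) ^ (2-p)) (𝓝[<] (1:ℝ)) (𝓝 0) := by
    have := aux_tendsto_sub.rpow_const (p := 2-p) (Or.inr h2p.le)
    rwa [Real.zero_rpow (ne_of_gt h2p)] at this
  have := (h.const_mul ((p * a ^ (2-p) / (p-1)) / p)).mul_const (c ^ (1-p))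
  simpa [mul_comm, mul_assoc, mul_left_comm] using this

theorem aux_band (hp : p ∈ Set.Ioo (1:ℝ) 2) (ha : 0 < a)
    (h1 : ∀ y ∈ Set.Ico (0:ℝ) 1, HasDerivWithinAt ψ (ψd y) (Set.Ico 0 1) y)
    (heq : ∀ y ∈ Set.Ioo (0:ℝ) 1,
      ψd y + (p/(p-1)) * ψ y ^ ((p-1)/p) = (p * a ^ (2-p) / (p-1)) * (1-y))
    (hpos : ∀ y ∈ Set.Ioo (0:ℝ) 1, 0 < ψ y)
    {c c' : ℝ} (hc : 0 < c) (hcc : c < c') (hc' : c' < (p-1)⁻¹) :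
    ∃ Y ∈ Ioo (0:ℝ) 1, ∀ y0 ∈ Ico Y 1, ψ y0 ^ (1/p) / (1-y0) ≤ c →
      ∀ y ∈ Ico y0 1, ψ y ^ (1/p) / (1-y) ≤ c' := by
  have hp1 : (1:ℝ) < p := hp.1
  set W : ℝ → ℝ := fun z => ψ z ^ (1/p) / (1-z) with hW
  set δ : ℝ := ((p-1)⁻¹ - c') / 2 with hδ
  have hδ0 : 0 < δ := by rw [hδ]; linarith
  have hevs : ∀ᶠ y in 𝓝[<] (1:ℝ),
      (p * a ^ (2-p) / (p-1)) / p * (1-y) ^ (2-p) * c ^ (1-p) ≤ δ :=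
    (aux_small hp c).eventually (eventually_le_nhds hδ0)
  have hE : {y | ((p * a ^ (2-p) / (p-1)) / p * (1-y) ^ (2-p) * c ^ (1-p) ≤ δ)}
      ∩ Ioo (0:ℝ) 1 ∈ 𝓝[<] (1:ℝ) := Filter.inter_mem hevs aux_mem_filter
  obtain ⟨l, hl, hsub⟩ :=
    (mem_nhdsLT_iff_exists_mem_Ico_Ioo_subset (by norm_num : (1:ℝ)/2 < 1)).1 hE
  set Y : ℝ := (l + 1) / 2 with hY
  have hlY : l < Y := by rw [hY]; linarith [hl.2]
  have hY1 : Y < 1 := by rw [hY]; linarith [hl.2]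
  have hY0 : 0 < Y := by rw [hY]; linarith [hl.1]
  refine ⟨Y, ⟨hY0, hY1⟩, ?_⟩
  intro y0 hy0 hw0 y hy
  by_contra hlt
  push_neg at hlt
  -- basic facts
  have hIoo : ∀ z, y0 ≤ z → z ≤ y → z ∈ Ioo (0:ℝ) 1 := by
    intro z hz1 hz2
    exact ⟨lt_of_lt_of_le hY0 (le_trans hy0.1 hz1), lt_of_le_of_lt hz2 hy.2⟩
  have hIn : ∀ z, y0 ≤ z → z ≤ y → z ∈ Ioo l 1 := by
    intro z hz1 hz2
    exact ⟨lt_of_lt_of_le hlY (le_trans hy0.1 hz1), lt_of_le_of_lt hz2 hy.2⟩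
  have hWd : ∀ z, y0 ≤ z → z ≤ y → HasDerivAt W
      (((p * a ^ (2-p) / (p-1)) / p * (1-z) ^ (2-p) * (W z) ^ (1-p)
        + W z - (p-1)⁻¹) / (1-z)) z := fun z hz1 hz2 =>
    aux_hasDerivAt_w hp h1 heq hpos (hIoo z hz1 hz2)
  have hWc : ContinuousOn W (Icc y0 y) := fun z hz =>
    ((hWd z hz.1 hz.2).differentiableAt.continuousAt).continuousWithinAt
  have hy0y : y0 < y := by
    rcases lt_or_ge y0 y with h | h
    · exact h
    · exfalso
      have hyy0 : y = y0 := le_antisymm h hy.1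
      rw [hyy0] at hlt
      exact absurd (lt_of_le_of_lt hw0 (lt_trans hcc hlt)) (lt_irrefl _)
  -- last time W ≤ c before y
  set T : Set ℝ := Icc y0 y ∩ W ⁻¹' (Iic c) with hT
  have hTy0 : y0 ∈ T := ⟨⟨le_refl _, hy0y.le⟩, hw0⟩
  have hTclosed : IsClosed T :=
    hWc.preimage_isClosed_of_isClosed isClosed_Icc isClosed_Iic
  have hTcomp : IsCompact T :=
    isCompact_Icc.of_isClosed_subset hTclosed Set.inter_subset_left
  set y2 : ℝ := sSup T with hy2def
  have hy2T : y2 ∈ T := hTcomp.sSup_mem ⟨y0, hTy0⟩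
  have hy2 : y2 ∈ Icc y0 y := hy2T.1
  have hWy2 : W y2 ≤ c := hy2T.2
  -- first time W ≥ c' after y2
  set S : Set ℝ := Icc y2 y ∩ W ⁻¹' (Ici c') with hS
  have hSy : y ∈ S := ⟨⟨hy2.2, le_refl _⟩, hlt.le⟩
  have hSclosed : IsClosed S :=
    (hWc.mono (Icc_subset_Icc_left hy2.1)).preimage_isClosed_of_isClosed
      isClosed_Icc isClosed_Ici
  have hScomp : IsCompact S :=
    isCompact_Icc.of_isClosed_subset hSclosed Set.inter_subset_left
  set y3 : ℝ := sInf S with hy3def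
  have hy3S : y3 ∈ S := hScomp.sInf_mem ⟨y, hSy⟩
  have hy3 : y3 ∈ Icc y2 y := hy3S.1
  have hWy3 : c' ≤ W y3 := hy3S.2
  have hy23 : y2 < y3 := by
    rcases lt_or_ge y2 y3 with h | h
    · exact h
    · exfalso
      have : y3 = y2 := le_antisymm h hy3.1
      rw [this] at hWy3
      linarith
  -- in between, W stays in [c, c']
  have hmid : ∀ z ∈ Ioo y2 y3, c ≤ W z ∧ W z ≤ c' := by
    intro z hz
    have hz1 : y0 ≤ z := le_trans hy2.1 hz.1.le
    have hz2 : z ≤ y := le_trans hz.2.le hy3.2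
    constructor
    · by_contra hcon
      push_neg at hcon
      have : z ∈ T := ⟨⟨hz1, hz2⟩, hcon.le⟩
      have := le_csSup hTcomp.bddAbove this
      exact absurd (lt_of_le_of_lt this hz.1) (lt_irrefl _)
    · by_contra hcon
      push_neg at hcon
      have : z ∈ S := ⟨⟨hz.1.le, hz2⟩, hcon.le⟩
      have := csInf_le hScomp.bddBelow this
      exact absurd (lt_of_lt_of_le hz.2 this) (lt_irrefl _)
  -- W is strictly decreasing on [y2, y3]
  have hanti : StrictAntiOn W (Icc y2 y3) := by
    apply strictAntiOn_of_deriv_neg (convex_Icc _ _)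
      (hWc.mono (Icc_subset_Icc hy2.1 hy3.2))
    intro z hz
    rw [interior_Icc] at hz
    have hz1 : y0 ≤ z := le_trans hy2.1 hz.1.le
    have hz2 : z ≤ y := le_trans hz.2.le hy3.2
    rw [(hWd z hz1 hz2).deriv]
    have hsmallz := (hsub (hIn z hz1 hz2)).1
    have hle := aux_wd_le hp ha (hIoo z hz1 hz2) hc (hmid z hz).1 (hmid z hz).2 hsmallz
    have hneg : (δ + c' - (p-1)⁻¹) / (1-z) < 0 := by
      apply div_neg_of_neg_of_pos
      · rw [hδ]; linarith
      · linarith [(hIoo z hz1 hz2).2]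
    calc ((p * a ^ (2-p) / (p-1)) / p * (1-z) ^ (2-p) * (W z) ^ (1-p)
          + W z - (p-1)⁻¹) / (1-z) ≤ (δ + c' - (p-1)⁻¹) / (1-z) := hle
      _ < 0 := hneg
  have hfin : W y3 < W y2 :=
    hanti ⟨le_refl _, hy23.le⟩ ⟨hy23.le, le_refl _⟩ hy23
  linarith

theorem aux_w_bounds (hp : p ∈ Set.Ioo (1:ℝ) 2) (ha : 0 < a)
    (h1 : ∀ y ∈ Set.Ico (0:ℝ) 1, HasDerivWithinAt ψ (ψd y) (Set.Ico 0 1) y)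
    (heq : ∀ y ∈ Set.Ioo (0:ℝ) 1,
      ψd y + (p/(p-1)) * ψ y ^ ((p-1)/p) = (p * a ^ (2-p) / (p-1)) * (1-y))
    (hpos : ∀ y ∈ Set.Ioo (0:ℝ) 1, 0 < ψ y)
    (hlim : Tendsto ψ (𝓝[<] (1:ℝ)) (𝓝 0))
    {y : ℝ} (hy : y ∈ Ioo (0:ℝ) 1) :
    0 < ψ y ^ (1/p) / (1-y) ∧ ψ y ^ (1/p) / (1-y) ≤ (p-1)⁻¹ := by
  have h1y : (0:ℝ) < 1 - y := by linarith [hy.2]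
  have hv := aux_part_i hp ha h1 heq hpos hlim hy
  constructor
  · exact div_pos (Real.rpow_pos_of_pos (hpos y hy) _) h1y
  · rw [div_le_iff₀ h1y]
    linarith [hv]

theorem aux_tendsto_w (hp : p ∈ Set.Ioo (1:ℝ) 2) (ha : 0 < a)
    (h1 : ∀ y ∈ Set.Ico (0:ℝ) 1, HasDerivWithinAt ψ (ψd y) (Set.Ico 0 1) y)
    (heq : ∀ y ∈ Set.Ioo (0:ℝ) 1,
      ψd y + (p/(p-1)) * ψ y ^ ((p-1)/p) = (p * a ^ (2-p) / (p-1)) * (1-y))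
    (hpos : ∀ y ∈ Set.Ioo (0:ℝ) 1, 0 < ψ y)
    (hlim : Tendsto ψ (𝓝[<] (1:ℝ)) (𝓝 0)) :
    ∃ M, 0 ≤ M ∧ M ≤ (p-1)⁻¹ ∧
      Tendsto (fun y => ψ y ^ (1/p) / (1-y)) (𝓝[<] (1:ℝ)) (𝓝 M) := by
  have hp1 : (1:ℝ) < p := hp.1
  set W : ℝ → ℝ := fun z => ψ z ^ (1/p) / (1-z) with hWdef
  set f : Filter ℝ := 𝓝[<] (1:ℝ) with hf
  have hevβ : ∀ᶠ y in f, W y ≤ (p-1)⁻¹ := by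
    filter_upwards [aux_mem_filter] with y hy
    exact (aux_w_bounds hp ha h1 heq hpos hlim hy).2
  have hev0 : ∀ᶠ y in f, 0 < W y := by
    filter_upwards [aux_mem_filter] with y hy
    exact (aux_w_bounds hp ha h1 heq hpos hlim hy).1
  have hbdd : Filter.IsBoundedUnder (· ≤ ·) f W := ⟨(p-1)⁻¹, eventually_map.2 hevβ⟩
  have hbdd' : Filter.IsBoundedUnder (· ≥ ·) f W :=
    ⟨0, eventually_map.2 (hev0.mono fun y hy => hy.le)⟩
  have hcob : Filter.IsCoboundedUnder (· ≤ ·) f W := hbdd'.isCoboundedUnder_le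
  set M : ℝ := Filter.limsup W f with hM
  have hM1 : M ≤ (p-1)⁻¹ := Filter.limsup_le_of_le hcob hevβ
  have hM0 : 0 ≤ M :=
    Filter.le_limsup_of_frequently_le ((hev0.mono fun y hy => hy.le).frequently) hbdd
  refine ⟨M, hM0, hM1, ?_⟩
  rw [tendsto_order]
  constructor
  · intro b hb
    rcases lt_or_ge b 0 with hb0 | hb0
    · filter_upwards [hev0] with z hz; linarith
    · by_contra hcon
      rw [Filter.not_eventually] at hcon
      have hfreq : ∃ᶠ z in f, W z ≤ b := hcon.mono fun z hz => not_lt.1 hz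
      set c1 : ℝ := (b + M) / 2 with hc1
      set c2 : ℝ := (c1 + M) / 2 with hc2
      have hc10 : 0 < c1 := by rw [hc1]; linarith
      have hc12 : c1 < c2 := by rw [hc1, hc2]; linarith
      have hc2β : c2 < (p-1)⁻¹ := by
        have : c2 < M := by rw [hc2, hc1]; linarith
        linarith
      obtain ⟨Y, hY, hband⟩ := aux_band hp ha h1 heq hpos hc10 hc12 hc2β
      have hIco : Ioo Y 1 ∈ f := Ioo_mem_nhdsLT_of_mem ⟨hY.2, le_refl _⟩
      obtain ⟨y0, hy0b, hy0I⟩ := (hfreq.and_eventually hIco).exists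
      have hy0c1 : W y0 ≤ c1 := le_trans hy0b (by rw [hc1]; linarith)
      have hev2 : ∀ᶠ z in f, W z ≤ c2 := by
        have hIco2 : Ioo y0 1 ∈ f := Ioo_mem_nhdsLT_of_mem ⟨hy0I.2, le_refl _⟩
        filter_upwards [hIco2] with z hz
        exact hband y0 ⟨hy0I.1.le, hy0I.2⟩ hy0c1 z ⟨hz.1.le, hz.2⟩
      have : M ≤ c2 := Filter.limsup_le_of_le hcob hev2
      have hc2M : c2 < M := by rw [hc2, hc1]; linarith
      linarith
  · intro b hb
    exact Filter.eventually_lt_of_limsup_lt hb hbdd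

theorem aux_M_cases (hp : p ∈ Set.Ioo (1:ℝ) 2) (ha : 0 < a)
    (h1 : ∀ y ∈ Set.Ico (0:ℝ) 1, HasDerivWithinAt ψ (ψd y) (Set.Ico 0 1) y)
    (heq : ∀ y ∈ Set.Ioo (0:ℝ) 1,
      ψd y + (p/(p-1)) * ψ y ^ ((p-1)/p) = (p * a ^ (2-p) / (p-1)) * (1-y))
    (hpos : ∀ y ∈ Set.Ioo (0:ℝ) 1, 0 < ψ y)
    {M : ℝ} (hM0 : 0 ≤ M) (hM1 : M ≤ (p-1)⁻¹)
    (htend : Tendsto (fun y => ψ y ^ (1/p) / (1-y)) (𝓝[<] (1:ℝ)) (𝓝 M)) :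
    M = 0 ∨ M = (p-1)⁻¹ := by
  have hp1 : (1:ℝ) < p := hp.1
  by_contra hcon
  push_neg at hcon
  obtain ⟨hne0, hneβ⟩ := hcon
  have hM0' : 0 < M := lt_of_le_of_ne hM0 (Ne.symm hne0)
  have hM1' : M < (p-1)⁻¹ := lt_of_le_of_ne hM1 hneβ
  set W : ℝ → ℝ := fun z => ψ z ^ (1/p) / (1-z) with hWdef
  set f : Filter ℝ := 𝓝[<] (1:ℝ) with hf
  set β : ℝ := (p-1)⁻¹ with hβ
  set c : ℝ := M / 2 with hc
  set c' : ℝ := (M + β) / 2 with hc'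
  set δ : ℝ := (β - c') / 2 with hδ
  have hc0 : 0 < c := by rw [hc]; linarith
  have hδ0 : 0 < δ := by rw [hδ, hc']; linarith
  have hev1 : ∀ᶠ z in f, c < W z := (tendsto_order.1 htend).1 c (by rw [hc]; linarith)
  have hev2 : ∀ᶠ z in f, W z < c' := (tendsto_order.1 htend).2 c' (by rw [hc']; linarith)
  have hev3 : ∀ᶠ z in f,
      (p * a ^ (2-p) / (p-1)) / p * (1-z) ^ (2-p) * c ^ (1-p) ≤ δ :=
    (aux_small hp c).eventually (eventually_le_nhds hδ0)
  have hE : {z | c < W z} ∩ ({z | W z < c'} ∩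
      ({z | (p * a ^ (2-p) / (p-1)) / p * (1-z) ^ (2-p) * c ^ (1-p) ≤ δ}
        ∩ Ioo (0:ℝ) 1)) ∈ f :=
    Filter.inter_mem hev1 (Filter.inter_mem hev2 (Filter.inter_mem hev3 aux_mem_filter))
  obtain ⟨l, hl, hsub⟩ :=
    (mem_nhdsLT_iff_exists_mem_Ico_Ioo_subset (by norm_num : (1:ℝ)/2 < 1)).1 hE
  set Y : ℝ := (l + 1) / 2 with hY
  have hlY : l < Y := by rw [hY]; linarith [hl.2]
  have hY1 : Y < 1 := by rw [hY]; linarith [hl.2]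
  have hY0 : 0 < Y := by rw [hY]; linarith [hl.1]
  have hmem : ∀ z ∈ Ico Y 1, z ∈ Ioo l 1 := fun z hz => ⟨lt_of_lt_of_le hlY hz.1, hz.2⟩
  -- φ = W - δ log(1-z) is antitone on [Y, 1)
  set φ : ℝ → ℝ := fun z => W z - δ * Real.log (1-z) with hφ
  have hφd : ∀ z ∈ Ico Y 1, HasDerivAt φ
      (((p * a ^ (2-p) / (p-1)) / p * (1-z) ^ (2-p) * (W z) ^ (1-p)
        + W z - (p-1)⁻¹) / (1-z) + δ / (1-z)) z := by
    intro z hz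
    have hz1 : (0:ℝ) < 1 - z := by linarith [hz.2]
    have hzIoo : z ∈ Ioo (0:ℝ) 1 := (hsub (hmem z hz)).2.2.2
    have hWd := aux_hasDerivAt_w hp h1 heq hpos hzIoo
    have hlog : HasDerivAt (fun t : ℝ => Real.log (1-t)) (-1 / (1-z)) z := by
      have hb : HasDerivAt (fun t : ℝ => 1 - t) (-1) z := by
        simpa using (hasDerivAt_id z).const_sub 1
      exact hb.log (ne_of_gt hz1)
    have := hWd.sub (hlog.const_mul δ)
    refine this.congr_deriv ?_
    simp only [hWdef]
    have hzne : (1:ℝ) - z ≠ 0 := ne_of_gt hz1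
    field_simp
    ring
  have hφanti : AntitoneOn φ (Ico Y 1) := by
    apply antitoneOn_of_deriv_nonpos (convex_Ico _ _)
    · intro z hz
      exact ((hφd z hz).differentiableAt.continuousAt).continuousWithinAt
    · intro z hz
      rw [interior_Ico] at hz
      exact (hφd z ⟨hz.1.le, hz.2⟩).differentiableAt.differentiableWithinAt
    · intro z hz
      rw [interior_Ico] at hz
      have hz' : z ∈ Ico Y 1 := ⟨hz.1.le, hz.2⟩
      rw [(hφd z hz').deriv]
      have hzIoo : z ∈ Ioo (0:ℝ) 1 := (hsub (hmem z hz')).2.2.2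
      have hz1 : (0:ℝ) < 1 - z := by linarith [hzIoo.2]
      have hcW : c ≤ W z := (hsub (hmem z hz')).1.le
      have hWc' : W z ≤ c' := (hsub (hmem z hz')).2.1.le
      have hsm := (hsub (hmem z hz')).2.2.1
      have hle := aux_wd_le hp ha hzIoo hc0 hcW hWc' hsm
      have heq2 : δ + c' - (p-1)⁻¹ = -δ := by rw [hδ]; ring
      rw [heq2] at hle
      have : -δ / (1-z) + δ / (1-z) = 0 := by ring
      linarith [add_le_add_right hle (δ / (1-z))]
  -- contradiction: W y ≤ φ Y + δ log(1-y) → -∞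
  have hlogtend : Tendsto (fun z : ℝ => Real.log (1-z)) f atBot := by
    apply Real.tendsto_log_nhdsGT_zero.comp
    apply tendsto_nhdsWithin_of_tendsto_nhds_of_eventually_within _ aux_tendsto_sub
    filter_upwards [self_mem_nhdsWithin] with z hz
    simp only [mem_Iio] at hz
    exact mem_Ioi.2 (by linarith)
  have hYmem : Y ∈ Ico Y 1 := ⟨le_refl _, hY1⟩
  have hevlog : ∀ᶠ z in f, Real.log (1-z) < (c - φ Y) / δ :=
    hlogtend.eventually (eventually_lt_atBot _)
  have hIcof : Ioo Y 1 ∈ f := Ioo_mem_nhdsLT_of_mem ⟨hY1, le_refl _⟩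
  obtain ⟨z, ⟨hzc, hzlog⟩, hz3⟩ := ((hev1.and hevlog).and hIcof).exists
  have hφz : φ z ≤ φ Y := hφanti hYmem ⟨hz3.1.le, hz3.2⟩ hz3.1.le
  have h5 : δ * Real.log (1-z) < c - φ Y := by
    have h6 := (mul_lt_mul_iff_right₀ hδ0).2 hzlog
    rwa [mul_div_cancel₀ _ (ne_of_gt hδ0)] at h6
  have hWz : W z = φ z + δ * Real.log (1-z) := by simp only [hφ]; ring
  linarith

end Aux

/-- If moreover `ψ > 0` on `(0,1)` and `ψ(y) → 0` as `y → 1`, then, with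
`κ := (p-1)^{-p}`: (i) `0 ≤ ψ(y) ≤ κ(1-y)^p` on `(0,1)`; (ii) `y ↦ ψ(y)(1-y)^{-p}` has a
limit `L` as `y → 1` and `L ∈ {0, κ}`. -/
theorem stmt8 (p a : ℝ) (hp : p ∈ Set.Ioo (1:ℝ) 2) (ha : 0 < a)
    (ψ ψd : ℝ → ℝ) (hψ : PsiSol p a ψ ψd)
    (hpos : ∀ y ∈ Set.Ioo (0:ℝ) 1, 0 < ψ y)
    (hlim : Tendsto ψ (𝓝[<] (1:ℝ)) (𝓝 0)) :
    (∀ y ∈ Set.Ioo (0:ℝ) 1, 0 ≤ ψ y ∧ ψ y ≤ (p-1) ^ (-p) * (1-y) ^ p) ∧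
    (∃ L : ℝ, Tendsto (fun y => ψ y * (1-y) ^ (-p)) (𝓝[<] (1:ℝ)) (𝓝 L) ∧
      (L = 0 ∨ L = (p-1) ^ (-p))) := by
  obtain ⟨h1, hcont, h3, h4, heq⟩ := hψ
  have hp1 : (1:ℝ) < p := hp.1
  have hp0 : (0:ℝ) < p := by linarith
  constructor
  · intro y hy
    exact ⟨h3 y (Ioo_subset_Ico_self hy), aux_part_i' hp ha h1 heq hpos hlim hy⟩
  · obtain ⟨M, hM0, hM1, htend⟩ := aux_tendsto_w hp ha h1 heq hpos hlim
    refine ⟨M ^ p, ?_, ?_⟩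
    · have h5 := htend.rpow_const (p := p) (Or.inr hp0.le)
      apply h5.congr'
      filter_upwards [aux_mem_filter] with y hy
      exact (aux_w_eq hp hpos hy).symm
    · rcases aux_M_cases hp ha h1 heq hpos hM0 hM1 htend with hM | hM
      · left; rw [hM, Real.zero_rpow (ne_of_gt hp0)]
      · right
        rw [hM, Real.inv_rpow (by linarith : (0:ℝ) ≤ p - 1), ← Real.rpow_neg (by linarith)]
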